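/- Let A be a ring and M a right A-module with generators indexed by a finite set G, presented via structure coefficients c_{ab} ∈ A satisfying the type-D structure equation d(c_{ac}) + Σ_{b∈G} c_{ab}c_{bc} = 0 for all a,c ∈ G (A a dg-algebra over 𝔽₂). If x, y ∈ G satisfy: c_{xy} is invertible with inverse c_{xy}^{-1} and d(c_{xy}) = 0, then the coefficients c'_{ac} = c_{ac} + c_{ay}c_{xy}^{-1}c_{xc} for a, c ∈ G\{x,y} also satisfy the type-D structure equation: d(c'_{ac}) + Σ_{b∈G\{x,y}} c'_{ab}c'_{bc} = 0. -/
import Mathlib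


/-- Type-D cancellation over a unital dg-algebra `A` over `𝔽₂`: if the
coefficients `(c_{ab})` satisfy the type-D structure equation
`d(c_{ac}) + ∑_b c_{ab} c_{bc} = 0`, `x ≠ y`, `c_{xy}` is a unit with
`d(c_{xy}) = 0`, then the cancelled coefficients
`c'_{ac} = c_{ac} + c_{ay} c_{xy}⁻¹ c_{xc}` on `G \ {x,y}` also satisfy the
type-D structure equation. -/
theorem typeD_cancellation_structure_eq
    {A : Type*} [Ring A] [Algebra (ZMod 2) A]
    (d : A →+ A)
    (hleib : ∀ a b : A, d (a * b) = d a * b + a * d b)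
    (hd2 : ∀ a : A, d (d a) = 0)
    {G : Type*} [Fintype G] [DecidableEq G]
    (c : G → G → A)
    (hstr : ∀ a b : G, d (c a b) + ∑ e : G, c a e * c e b = 0)
    (x y : G) (hxy : x ≠ y)
    (u : Aˣ) (hu : (u : A) = c x y) (hdu : d (c x y) = 0) :
    ∀ a b : {g : G // g ≠ x ∧ g ≠ y},
      d (c ↑a ↑b + c ↑a y * ((u⁻¹ : Aˣ) : A) * c x ↑b)
        + ∑ e : {g : G // g ≠ x ∧ g ≠ y},
            (c ↑a ↑e + c ↑a y * ((u⁻¹ : Aˣ) : A) * c x ↑e)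
              * (c ↑e ↑b + c ↑e y * ((u⁻¹ : Aˣ) : A) * c x ↑b) = 0 := by
  classical
  set v : A := ((u⁻¹ : Aˣ) : A) with hv_def
  -- characteristic 2
  have h20 : (2 : A) = 0 := by
    have h := map_natCast (algebraMap (ZMod 2) A) 2
    have h2' : ((2 : ℕ) : ZMod 2) = 0 := by decide
    rw [h2', map_zero] at h
    simpa using h.symm
  have h2 : ∀ a : A, a + a = 0 := by
    intro a
    calc a + a = 2 * a := (two_mul a).symm
      _ = 0 := by rw [h20, zero_mul]
  have cancel : ∀ {p q : A}, p + q = 0 → p = q := by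
    intro p q h
    calc p = p + 0 := (add_zero p).symm
      _ = p + (q + q) := by rw [h2 q]
      _ = (p + q) + q := (add_assoc p q q).symm
      _ = q := by rw [h, zero_add]
  -- d of coefficients
  have hD : ∀ a b : G, d (c a b) = ∑ e : G, c a e * c e b := fun a b => cancel (hstr a b)
  -- unit facts
  have hv1 : c x y * v = 1 := by rw [← hu, hv_def]; exact u.mul_inv
  have hv1' : v * c x y = 1 := by rw [← hu, hv_def]; exact u.inv_mul
  have hd1 : d (1 : A) = 0 := by
    have h := hleib 1 1
    rw [one_mul, mul_one, one_mul] at h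
    -- h : d 1 = d 1 + d 1
    rw [h2 (d 1)] at h; exact h
  have hdv : d v = 0 := by
    have h := hleib v (c x y)
    rw [hv1', hd1, hdu, mul_zero, add_zero] at h
    -- h : 0 = d v * c x y
    have : d v * (c x y * v) = 0 * v := by rw [← mul_assoc, ← h, zero_mul]
    rw [hv1, mul_one, zero_mul] at this
    exact this
  -- sum over the subtype vs full sum
  have hsum : ∀ F : G → A,
      (∑ e : {g : G // g ≠ x ∧ g ≠ y}, F ↑e) = (∑ e : G, F e) + F x + F y := by
    intro F
    have hmem : ∀ g : G, g ∈ Finset.univ.filter (fun g => g ≠ x ∧ g ≠ y) ↔ (g ≠ x ∧ g ≠ y) := by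
      intro g; simp
    have h1 : (∑ e ∈ Finset.univ.filter (fun g => g ≠ x ∧ g ≠ y), F e)
        = ∑ e : {g : G // g ≠ x ∧ g ≠ y}, F ↑e := Finset.sum_subtype _ hmem F
    have h3 : Finset.univ.filter (fun g => ¬(g ≠ x ∧ g ≠ y)) = ({x, y} : Finset G) := by
      ext g
      simp [not_and_or, or_comm]
      tauto
    have h4 : (∑ e ∈ Finset.univ.filter (fun g => ¬(g ≠ x ∧ g ≠ y)), F e) = F x + F y := by
      rw [h3, Finset.sum_pair hxy]
    have h5 := Finset.sum_filter_add_sum_filter_not Finset.univ (fun g => g ≠ x ∧ g ≠ y) F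
    rw [h1, h4] at h5
    calc (∑ e : {g : G // g ≠ x ∧ g ≠ y}, F ↑e)
        = (∑ e : {g : G // g ≠ x ∧ g ≠ y}, F ↑e) + ((F x + F y) + (F x + F y)) := by
          rw [h2 (F x + F y), add_zero]
      _ = ((∑ e : {g : G // g ≠ x ∧ g ≠ y}, F ↑e) + (F x + F y)) + F x + F y := by abel
      _ = (∑ e : G, F e) + F x + F y := by rw [h5]
  intro a b
  set S1 : A := ∑ e : G, c ↑a e * c e ↑b with hS1
  set S2 : A := ∑ e : G, c ↑a e * c e y with hS2
  set S3 : A := ∑ e : G, c x e * c e ↑b with hS3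
  -- Step A : the differential part
  have stepA : d (c ↑a ↑b + c ↑a y * v * c x ↑b) = S1 + S2 * v * c x ↑b + c ↑a y * v * S3 := by
    rw [map_add, hleib (c ↑a y * v) (c x ↑b), hleib (c ↑a y) v, hdv, mul_zero, add_zero,
      hD ↑a ↑b, hD ↑a y, hD x ↑b, ← hS1, ← hS2, ← hS3]
    abel
  -- Step B : the sum part
  set F : G → A := fun e => (c ↑a e + c ↑a y * v * c x e) * (c e ↑b + c e y * v * c x ↑b)
    with hF
  have hFx : F x = 0 := by
    show (c ↑a x + c ↑a y * v * c x x) * (c x ↑b + c x y * v * c x ↑b) = 0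
    rw [hv1, one_mul, h2 (c x ↑b), mul_zero]
  have hFy : F y = 0 := by
    show (c ↑a y + c ↑a y * v * c x y) * (c y ↑b + c y y * v * c x ↑b) = 0
    rw [mul_assoc (c ↑a y) v (c x y), hv1', mul_one, h2 (c ↑a y), zero_mul]
  have hexp : ∀ e : G, F e
      = c ↑a e * c e ↑b + (c ↑a e * c e y) * (v * c x ↑b)
        + (c ↑a y * v) * (c x e * c e ↑b)
        + (c ↑a y * v) * ((c x e * c e y) * (v * c x ↑b)) := by
    intro e
    show (c ↑a e + c ↑a y * v * c x e) * (c e ↑b + c e y * v * c x ↑b) = _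
    noncomm_ring
  have hT4 : (∑ e : G, c x e * c e y) = 0 := by rw [← hD x y, hdu]
  have stepB : (∑ e : {g : G // g ≠ x ∧ g ≠ y}, F ↑e)
      = S1 + S2 * v * c x ↑b + c ↑a y * v * S3 := by
    rw [hsum F, hFx, hFy, add_zero, add_zero]
    calc (∑ e : G, F e)
        = ∑ e : G, (c ↑a e * c e ↑b + (c ↑a e * c e y) * (v * c x ↑b)
            + (c ↑a y * v) * (c x e * c e ↑b)
            + (c ↑a y * v) * ((c x e * c e y) * (v * c x ↑b))) :=
          Finset.sum_congr rfl (fun e _ => hexp e)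
      _ = S1 + S2 * (v * c x ↑b) + (c ↑a y * v) * S3
            + (c ↑a y * v) * ((∑ e : G, c x e * c e y) * (v * c x ↑b)) := by
          rw [Finset.sum_add_distrib, Finset.sum_add_distrib, Finset.sum_add_distrib,
            ← Finset.sum_mul, ← Finset.mul_sum, ← Finset.mul_sum, ← Finset.sum_mul]
      _ = S1 + S2 * v * c x ↑b + c ↑a y * v * S3 := by
          rw [hT4, zero_mul, mul_zero, add_zero, mul_assoc S2 v, mul_assoc (c ↑a y) v]
  -- conclude
  calc d (c ↑a ↑b + c ↑a y * v * c x ↑b)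
        + ∑ e : {g : G // g ≠ x ∧ g ≠ y}, F ↑e
      = (S1 + S2 * v * c x ↑b + c ↑a y * v * S3)
        + (S1 + S2 * v * c x ↑b + c ↑a y * v * S3) := by rw [stepA, stepB]
    _ = 0 := h2 _
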